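/- Incompatible nodes property: suppose k > 1 and a node p has r neighbors with magn(p) = (r−1)k + j for some j with 2 ≤ j ≤ k. If p has a neighbor q with magn(q) ≤ j − 1, then the grid is unsolvable. -/

import Mathlib

open Finset in
/-- Incompatible nodes property. -/
theorem stmt14 {V : Type*} [Fintype V] [DecidableEq V]
    (Adj : V → V → Prop) [DecidableRel Adj] (magn : V → ℕ) (k : ℕ) (hk : 1 < k)
    (p : V) (r j : ℕ) (hr : (univ.filter (fun q => Adj p q)).card = r)
    (hj : 2 ≤ j) (hjk : j ≤ k) (hmag : magn p = (r - 1) * k + j)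
    (q : V) (hq : Adj p q) (hqm : magn q ≤ j - 1) :
    ¬ ∃ c : V → V → ℕ, (∀ a b, c a b = c b a) ∧ (∀ a b, ¬ Adj a b → c a b = 0) ∧
      (∀ a b, c a b ≤ k) ∧
      ∀ a, ∑ b ∈ univ.filter (fun b => Adj a b), c a b = magn a := by
  rintro ⟨c, hsym, hzero, hle, hsum⟩
  set S := univ.filter (fun b => Adj p b) with hS
  have hqS : q ∈ S := by simp [hS, hq]
  have h1 : ∑ b ∈ S.erase q, c p b ≤ (r - 1) * k := by
    calc ∑ b ∈ S.erase q, c p b ≤ (S.erase q).card * k :=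
          Finset.sum_le_card_nsmul _ _ k (fun b _ => hle p b)
      _ = (r - 1) * k := by rw [Finset.card_erase_of_mem hqS, hr]
  have hsplit : c p q + ∑ b ∈ S.erase q, c p b = magn p := by
    rw [← hsum p]; exact Finset.add_sum_erase S (c p) hqS
  have hge : j ≤ c p q := by omega
  by_cases hA : Adj q p
  · have hle2 : c q p ≤ magn q := by
      rw [← hsum q]
      exact Finset.single_le_sum (fun _ _ => Nat.zero_le _) (by simp [hA])
    have := hsym p q; omega
  · have := hzero q p hA; have := hsym p q; omega
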